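/- arXiv:1708.07500 — 6 statements merged into one kernel-verified Lean document; each statement's English description precedes it below -/
import Mathlib

section
/- (Lemma 2.2, lattice form: the invariant lattice of a minimal symplectic G-conic bundle has rank 2.) Let N ≥ 2, set F = H − E_1 in L_N, and let G be a group acting on L_N by ℤ-module automorphisms such that: (i) g(K) = K and g(F) = F for every g ∈ G; (ii) for every g ∈ G and every j ∈ {2,…,N}, g(E_j) lies in the set {E_k : 2 ≤ k ≤ N} ∪ {F − E_k : 2 ≤ k ≤ N}; and (iii) for every j ∈ {2,…,N} there exists g ∈ G with g(E_j) = F − E_j. Then the fixed submodule {x ∈ L_N : g(x) = x for all g ∈ G} equals ℤ·K + ℤ·F. -/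
/-- The lattice `L_N`: the free `ℤ`-module with basis `H, E_1, …, E_N`
(coordinate `0` is the `H`-coordinate, coordinate `i.succ` is the `E_{i+1}`-coordinate). -/
abbrev L (N : ℕ) := Fin (N + 1) → ℤ

/-- The intersection form on `L_N`: `H·H = 1`, `E_i·E_i = -1`, mixed products `0`. -/
def interForm {N : ℕ} (x y : L N) : ℤ :=
  x 0 * y 0 - ∑ i : Fin N, x i.succ * y i.succ

/-- The line class `H`. -/
def Hc {N : ℕ} : L N := Pi.single 0 1

/-- The exceptional class `E_{j+1}` (so `Ec 0 = E_1`, …, `Ec (N-1) = E_N`). -/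
def Ec {N : ℕ} (j : Fin N) : L N := Pi.single j.succ 1

/-- The canonical class `K = -3H + E_1 + ⋯ + E_N`. -/
def Kc {N : ℕ} : L N := fun i => if i = 0 then -3 else 1

/-- An exceptional class: `e·e = -1` and `K·e = -1`. -/
def Exceptional {N : ℕ} (e : L N) : Prop :=
  interForm e e = -1 ∧ interForm Kc e = -1

section Aux

variable {N : ℕ} [NeZero N]

lemma hc_apply (i : Fin (N + 1)) : (Hc : L N) i = if i = 0 then 1 else 0 := by
  simp [Hc, Pi.single_apply]

lemma ec_apply (k : Fin N) (i : Fin (N + 1)) :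
    (Ec k : L N) i = if i = k.succ then 1 else 0 := by
  simp [Ec, Pi.single_apply]

lemma hc_zero : (Hc : L N) 0 = 1 := by rw [hc_apply, if_pos rfl]

lemma hc_succ (k : Fin N) : (Hc : L N) k.succ = 0 := by
  rw [hc_apply, if_neg (Fin.succ_ne_zero k)]

lemma ec_self (j : Fin N) : (Ec j : L N) j.succ = 1 := by
  rw [ec_apply, if_pos rfl]

lemma ec_zero (j : Fin N) : (Ec j : L N) 0 = 0 := by
  rw [ec_apply, if_neg (Fin.succ_ne_zero j).symm]

lemma ec_ne {j k : Fin N} (h : k ≠ j) : (Ec j : L N) k.succ = 0 := by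
  rw [ec_apply, if_neg (fun hh => h (Fin.succ_inj.mp hh))]

lemma kc_zero : (Kc : L N) 0 = -3 := by simp [Kc]

lemma kc_succ (k : Fin N) : (Kc : L N) k.succ = 1 := by
  simp [Kc, Fin.succ_ne_zero]

lemma F_zero : ((Hc - Ec 0 : L N)) 0 = 1 := by
  rw [Pi.sub_apply, hc_zero, ec_zero]; norm_num

lemma F_succ {j : Fin N} (hj : j ≠ 0) : ((Hc - Ec 0 : L N)) j.succ = 0 := by
  rw [Pi.sub_apply, hc_succ, ec_ne hj]; norm_num

lemma F_succ_zero : ((Hc - Ec 0 : L N)) (Fin.succ 0) = -1 := by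
  rw [Pi.sub_apply, hc_succ, ec_self]; norm_num

/-- decomposition of a vector in the standard basis -/
lemma decomp (y : L N) : y = y 0 • (Hc : L N) + ∑ k : Fin N, y k.succ • Ec k := by
  funext i
  induction i using Fin.cases with
  | zero =>
      simp only [Pi.add_apply, Pi.smul_apply, Finset.sum_apply, smul_eq_mul,
        hc_zero, ec_zero, mul_zero, Finset.sum_const_zero, mul_one, add_zero]
  | succ i =>
      simp only [Pi.add_apply, Pi.smul_apply, Finset.sum_apply, smul_eq_mul,
        hc_succ, ec_apply, mul_zero, zero_add, Fin.succ_inj, mul_ite, mul_one]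
      rw [Finset.sum_ite_eq Finset.univ i (fun k => y k.succ)]
      simp

lemma kc_decomp : (Kc : L N) = (-3 : ℤ) • (Hc : L N) + ∑ k : Fin N, Ec k := by
  funext i
  induction i using Fin.cases with
  | zero =>
      simp only [Pi.add_apply, Pi.smul_apply, Finset.sum_apply, smul_eq_mul,
        hc_zero, ec_zero, Finset.sum_const_zero, mul_one, add_zero, kc_zero]
  | succ i =>
      simp only [Pi.add_apply, Pi.smul_apply, Finset.sum_apply, smul_eq_mul,
        hc_succ, ec_apply, mul_zero, zero_add, Fin.succ_inj, kc_succ]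
      rw [Finset.sum_ite_eq Finset.univ i (fun _ => (1 : ℤ))]
      simp

end Aux

/-- Lemma 2.2 (lattice form): the invariant lattice of a minimal symplectic `G`-conic
bundle has rank 2: if a group `G` acts on `L_N` by `ℤ`-module automorphisms fixing `K`
and `F = H - E_1`, sending each `E_j` (`j ≥ 2`) into `{E_k, F - E_k : k ≥ 2}`, and for each
`j ≥ 2` some `g ∈ G` sends `E_j` to `F - E_j`, then the fixed submodule is `ℤK + ℤF`. -/
theorem stmt1 {N : ℕ} [NeZero N] (hN : 2 ≤ N)
    {G : Type*} [Group G]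
    (ρ : G →* (L N ≃ₗ[ℤ] L N))
    (hK : ∀ g : G, ρ g Kc = Kc)
    (hF : ∀ g : G, ρ g (Hc - Ec 0) = Hc - Ec 0)
    (hE : ∀ (g : G) (j : Fin N), j ≠ 0 →
      (∃ k : Fin N, k ≠ 0 ∧ ρ g (Ec j) = Ec k) ∨
      (∃ k : Fin N, k ≠ 0 ∧ ρ g (Ec j) = (Hc - Ec 0) - Ec k))
    (hmin : ∀ j : Fin N, j ≠ 0 → ∃ g : G, ρ g (Ec j) = (Hc - Ec 0) - Ec j) :
    {x : L N | ∀ g : G, ρ g x = x} =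
      {x : L N | ∃ a b : ℤ, x = a • (Kc : L N) + b • (Hc - Ec 0)} := by
  ext x
  simp only [Set.mem_setOf_eq]
  constructor
  · intro hx
    -- Key computation: for every j ≠ 0, x 0 + x 1 + 2 * x j.succ = 0
    have key : ∀ j : Fin N, j ≠ 0 →
        x 0 + x (Fin.succ 0) + 2 * x j.succ = 0 := by
      intro j hj
      obtain ⟨g, hg⟩ := hmin j hj
      set A := ρ g with hA
      have hAF : A (Hc - Ec 0) = Hc - Ec 0 := hF g
      -- value of (A (Ec j)) at j.succ is -1
      have hEjval : (A (Ec j)) j.succ = -1 := by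
        rw [hg, Pi.sub_apply, F_succ hj, ec_self]; norm_num
      -- A (F - Ec j) = Ec j
      have hpre : A ((Hc - Ec 0) - Ec j) = Ec j := by
        rw [map_sub, hAF, hg]; abel
      -- for k ≠ 0, k ≠ j, (A (Ec k)) j.succ = 0
      have hother : ∀ k : Fin N, k ≠ 0 → k ≠ j → (A (Ec k)) j.succ = 0 := by
        intro k hk0 hkj
        rcases hE g k hk0 with ⟨m, hm0, hm⟩ | ⟨m, hm0, hm⟩
        · by_cases hmj : m = j
          · exfalso
            subst hmj
            have heq : Ec k = (Hc - Ec 0) - Ec m := A.injective (by rw [hm, hpre])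
            have h0 := congrFun heq 0
            rw [ec_zero, Pi.sub_apply, F_zero, ec_zero] at h0
            norm_num at h0
          · rw [hm, ec_ne (fun h => hmj h.symm)]
        · by_cases hmj : m = j
          · exfalso
            subst hmj
            have heq : Ec k = Ec m := A.injective (by rw [hm, hg])
            have h1 : (Ec k : L N) m.succ = 1 := by rw [heq, ec_self]
            rw [ec_ne (Ne.symm hkj)] at h1
            norm_num at h1
          · rw [hm, Pi.sub_apply, F_succ hj, ec_ne (fun h => hmj h.symm)]
            norm_num
      -- (A Hc) j.succ = (A (Ec 0)) j.succ
      have hsub : (A Hc) j.succ - (A (Ec 0)) j.succ = 0 := by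
        have h := congrFun hAF j.succ
        rw [map_sub] at h
        rw [Pi.sub_apply] at h
        rw [h, F_succ hj]
      -- splitting sums over {0, j}
      have hsum : ∀ c : Fin N → ℤ,
          ∑ k : Fin N, c k * (A (Ec k)) j.succ
            = c 0 * (A (Ec 0)) j.succ + c j * (-1) := by
        intro c
        have h0j : (0 : Fin N) ≠ j := fun h => hj h.symm
        have hzero : ∀ k ∈ (Finset.univ : Finset (Fin N)),
            k ∉ ({0, j} : Finset (Fin N)) → c k * (A (Ec k)) j.succ = 0 := by
          intro k _ hk
          simp only [Finset.mem_insert, Finset.mem_singleton, not_or] at hk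
          rw [hother k hk.1 hk.2, mul_zero]
        rw [← Finset.sum_subset (Finset.subset_univ ({0, j} : Finset (Fin N))) hzero,
          Finset.sum_pair h0j, hEjval]
      -- from A Kc = Kc : compute (A (Ec 0)) j.succ
      have hKj : -3 * (A Hc) j.succ +
          ((1 : ℤ) * (A (Ec 0)) j.succ + (1 : ℤ) * (-1)) = 1 := by
        have h1 : A Kc = (-3 : ℤ) • A Hc + ∑ k : Fin N, A (Ec k) := by
          rw [← map_sum, ← map_smul, ← map_add, ← kc_decomp]
        have h2 := congrFun (h1.symm.trans (hK g)) j.succ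
        rw [kc_succ, Pi.add_apply, Pi.smul_apply, Finset.sum_apply, smul_eq_mul] at h2
        have h5 := hsum (fun _ => 1)
        rw [← h5]
        convert h2 using 3
        rw [one_mul]
      have hu0 : (A (Ec 0)) j.succ = -1 := by omega
      have huH : (A Hc) j.succ = -1 := by omega
      -- now evaluate A x = x at j.succ
      have hxdec : A x = x 0 • A Hc + ∑ k : Fin N, x k.succ • A (Ec k) := by
        conv_lhs => rw [decomp x]
        rw [map_add, map_smul, map_sum]
        simp only [map_smul]
      have h4 := congrFun ((hxdec.symm.trans (hx g))) j.succ
      rw [Pi.add_apply, Pi.smul_apply, Finset.sum_apply] at h4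
      simp only [Pi.smul_apply, smul_eq_mul] at h4
      rw [hsum (fun k => x k.succ), huH, hu0] at h4
      linarith [h4]
    -- conclude
    have h1N : (1 : ℕ) < N := hN
    set j0 : Fin N := ⟨1, h1N⟩ with hj0
    have hj0ne : j0 ≠ 0 := by
      intro h
      have := congrArg Fin.val h
      simp [hj0] at this
    set a : ℤ := x j0.succ with ha
    set b : ℤ := x 0 + 3 * a with hb
    refine ⟨a, b, ?_⟩
    have hkey0 := key j0 hj0ne
    funext i
    induction i using Fin.cases with
    | zero =>
        rw [Pi.add_apply, Pi.smul_apply, Pi.smul_apply, smul_eq_mul, smul_eq_mul,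
          kc_zero, F_zero, hb]
        ring
    | succ k =>
        rw [Pi.add_apply, Pi.smul_apply, Pi.smul_apply, smul_eq_mul, smul_eq_mul,
          kc_succ]
        by_cases hk : k = 0
        · subst hk
          rw [F_succ_zero]
          omega
        · have hkeyk := key k hk
          rw [F_succ hk]
          omega
  · rintro ⟨a, b, rfl⟩ g
    rw [map_add, map_smul, map_smul, hK g, hF g]
end

section
/- (Characteristic-element argument in the proof of Lemma 2.7.) Call an element c ∈ L_2 characteristic if c·x ≡ x·x (mod 2) for every x ∈ L_2. Then H − E_1 − E_2 is characteristic while E_1 and E_2 are not. Consequently, every ℤ-module automorphism g of L_2 that preserves the intersection form (g(x)·g(y) = x·y for all x, y) and maps the set of exceptional classes onto itself satisfies g(H − E_1 − E_2) = H − E_1 − E_2. -/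
/-- An element `c ∈ L_2` is characteristic if `c·x ≡ x·x (mod 2)` for all `x`. -/
def Characteristic (c : L 2) : Prop :=
  ∀ x : L 2, (2 : ℤ) ∣ (interForm c x - interForm x x)

@[simp] lemma vec3_two (a b c : ℤ) : (![a, b, c] : Fin 3 → ℤ) 2 = c := rfl

lemma interForm2 (x y : L 2) : interForm x y = x 0 * y 0 - x 1 * y 1 - x 2 * y 2 := by
  simp [interForm, Fin.sum_univ_two]; ring

lemma hc_sub : (Hc - Ec 0 - Ec 1 : L 2) = ![1,-1,-1] := by
  funext i; fin_cases i <;> simp [Hc, Ec, Pi.single, Function.update]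

lemma ec0_eq : (Ec 0 : L 2) = ![0,1,0] := by
  funext i; fin_cases i <;> simp [Ec, Pi.single, Function.update]

lemma ec1_eq : (Ec 1 : L 2) = ![0,0,1] := by
  funext i; fin_cases i <;> simp [Ec, Pi.single, Function.update]

lemma hc_eq : (Hc : L 2) = ![1,0,0] := by
  funext i; fin_cases i <;> simp [Hc, Pi.single, Function.update]

lemma kc_eq : (Kc : L 2) = ![-3,1,1] := by
  funext i; fin_cases i <;> simp [Kc]

lemma eq_of_coords (e : L 2) (v : Fin 3 → ℤ) (h0 : e 0 = v 0) (h1 : e 1 = v 1)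
    (h2 : e 2 = v 2) : e = v := by
  funext i; fin_cases i <;> assumption

/-- The only exceptional classes of `L_2` are `E_1`, `E_2`, `H - E_1 - E_2`. -/
lemma classify (e : L 2) (he : Exceptional e) :
    e = Ec 0 ∨ e = Ec 1 ∨ e = Hc - Ec 0 - Ec 1 := by
  obtain ⟨h1, h2⟩ := he
  rw [interForm2] at h1
  rw [interForm2, kc_eq] at h2
  norm_num at h2
  set a := e 0 with ha; set b := e 1 with hb; set c := e 2 with hc
  have ha0 : 0 ≤ a := by nlinarith [sq_nonneg (b - c)]
  have ha1 : a ≤ 1 := by nlinarith [sq_nonneg (b - c)]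
  interval_cases a
  · have hb01 : b * (b - 1) = 0 := by nlinarith
    rcases mul_eq_zero.1 hb01 with h | h
    · right; left; rw [ec1_eq]
      exact eq_of_coords _ _ (by simp; omega) (by simpa using h) (by simp; omega)
    · left; rw [ec0_eq]
      exact eq_of_coords _ _ (by simp; omega) (by simp; omega) (by simp; omega)
  · right; right; rw [hc_sub]
    have hb1 : (b + 1) ^ 2 = 0 := by nlinarith
    have hb : b = -1 := by nlinarith [pow_eq_zero_iff (n := 2) two_ne_zero |>.1 hb1]
    exact eq_of_coords _ _ (by simp; omega) (by simpa using hb) (by simp; omega)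

lemma char_main : Characteristic (Hc - Ec 0 - Ec 1) := by
  intro x
  have hv : interForm (![1,-1,-1] : L 2) x = x 0 + x 1 + x 2 := by
    rw [interForm2]; norm_num
  rw [hc_sub, hv, interForm2]
  have h : ∀ n : ℤ, 2 ∣ n * n - n := by
    intro n
    rcases Int.even_or_odd n with ⟨k, hk⟩ | ⟨k, hk⟩
    · exact ⟨2 * k * k - k, by rw [hk]; ring⟩
    · exact ⟨2 * k * k + k, by rw [hk]; ring⟩
  obtain ⟨p, hp⟩ := h (x 0)
  obtain ⟨q, hq⟩ := h (-(x 1))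
  obtain ⟨r, hr⟩ := h (-(x 2))
  exact ⟨-p + q + r, by linear_combination -hp + hq + hr⟩

/-- Characteristic-element argument in Lemma 2.7: `H - E_1 - E_2` is characteristic in
`L_2` while `E_1` and `E_2` are not; consequently every `ℤ`-module automorphism of `L_2`
preserving the intersection form and mapping the set of exceptional classes onto itself
fixes `H - E_1 - E_2`. -/
theorem stmt6 :
    Characteristic (Hc - Ec 0 - Ec 1) ∧
    ¬ Characteristic (Ec 0) ∧
    ¬ Characteristic (Ec 1) ∧
    (∀ g : L 2 ≃ₗ[ℤ] L 2,
      (∀ x y : L 2, interForm (g x) (g y) = interForm x y) →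
      (⇑g '' {e : L 2 | Exceptional e} = {e : L 2 | Exceptional e}) →
      g (Hc - Ec 0 - Ec 1) = Hc - Ec 0 - Ec 1) := by
  have hE0 : ¬ Characteristic (Ec 0) := by
    intro h
    have := h Hc
    rw [interForm2, interForm2, ec0_eq, hc_eq] at this
    norm_num at this
  have hE1 : ¬ Characteristic (Ec 1) := by
    intro h
    have := h Hc
    rw [interForm2, interForm2, ec1_eq, hc_eq] at this
    norm_num at this
  refine ⟨char_main, hE0, hE1, ?_⟩
  intro g hform hset
  -- `H - E_1 - E_2` is exceptional
  have hexc : Exceptional (Hc - Ec 0 - Ec 1 : L 2) := by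
    constructor
    · rw [interForm2, hc_sub]; norm_num
    · rw [interForm2, kc_eq, hc_sub]; norm_num
  -- hence its image is exceptional
  have hgexc : Exceptional (g (Hc - Ec 0 - Ec 1)) := by
    have : g (Hc - Ec 0 - Ec 1) ∈ ⇑g '' {e : L 2 | Exceptional e} :=
      Set.mem_image_of_mem _ hexc
    rw [hset] at this
    exact this
  -- and its image is characteristic
  have hgchar : Characteristic (g (Hc - Ec 0 - Ec 1)) := by
    intro x
    have h1 : interForm (g (Hc - Ec 0 - Ec 1)) x
        = interForm (Hc - Ec 0 - Ec 1) (g.symm x) := by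
      have := hform (Hc - Ec 0 - Ec 1) (g.symm x)
      rwa [g.apply_symm_apply] at this
    have h2 : interForm x x = interForm (g.symm x) (g.symm x) := by
      have := hform (g.symm x) (g.symm x)
      rw [g.apply_symm_apply] at this
      exact this

    rw [h1, h2]
    exact char_main (g.symm x)
  rcases classify _ hgexc with h | h | h
  · exact absurd (h ▸ hgchar) hE0
  · exact absurd (h ▸ hgchar) hE1
  · exact h
end

section
/- (Lemma 3.4: splitting of Γ.) Let Γ be a finite subgroup of T = S¹ × S¹ such that the images ρ_1(Γ) and ρ_2(Γ) have the same order n. Then there exists a cyclic subgroup Γ̃ of Γ of order n such that ρ_1 restricts to an isomorphism from Γ̃ onto ρ_1(Γ), and Γ is the internal direct product of Γ_1 := Γ ∩ ker ρ_1 and Γ̃; that is, Γ_1 ∩ Γ̃ = {1} and every element of Γ is a product of an element of Γ_1 and an element of Γ̃. -/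
/-- Lemma 3.4 (splitting of `Γ`): if `Γ` is a finite subgroup of `S¹ × S¹` whose images
under the two projections both have order `n`, then there is a cyclic subgroup `Γ̃ ≤ Γ`
of order `n` on which the first projection `ρ₁` restricts to an isomorphism onto
`ρ₁(Γ)`, and `Γ` is the internal direct product of `Γ₁ = Γ ∩ ker ρ₁` and `Γ̃`:
`Γ₁ ∩ Γ̃ = {1}` and every element of `Γ` is a product of an element of `Γ₁` and an
element of `Γ̃`. -/
theorem stmt10 (Γ : Subgroup (Circle × Circle))
    (hfin : (Γ : Set (Circle × Circle)).Finite) (n : ℕ)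
    (h1 : Nat.card ↥(Γ.map (MonoidHom.fst Circle Circle)) = n)
    (h2 : Nat.card ↥(Γ.map (MonoidHom.snd Circle Circle)) = n) :
    ∃ Γt : Subgroup (Circle × Circle),
      Γt ≤ Γ ∧
      IsCyclic ↥Γt ∧
      Nat.card ↥Γt = n ∧
      Γt.map (MonoidHom.fst Circle Circle) = Γ.map (MonoidHom.fst Circle Circle) ∧
      (∀ x ∈ Γt, ∀ y ∈ Γt,
        MonoidHom.fst Circle Circle x = MonoidHom.fst Circle Circle y → x = y) ∧
      (Γ ⊓ (MonoidHom.fst Circle Circle).ker) ⊓ Γt = ⊥ ∧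
      (∀ x ∈ Γ, ∃ u ∈ Γ ⊓ (MonoidHom.fst Circle Circle).ker, ∃ v ∈ Γt, x = u * v) := by
  set H1 := Γ.map (MonoidHom.fst Circle Circle) with hH1
  set H2 := Γ.map (MonoidHom.snd Circle Circle) with hH2
  have hH1fin : Finite ↥H1 := by
    have : ((H1 : Set Circle)) = (MonoidHom.fst Circle Circle) '' Γ := rfl
    exact Set.Finite.to_subtype (this ▸ hfin.image _)
  -- H1 is cyclic
  have hcyc : IsCyclic ↥H1 := by
    refine isCyclic_of_subgroup_isDomain ((Circle.coeHom).comp H1.subtype) ?_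
    intro x y hxy
    exact Subtype.ext (Circle.coe_injective hxy)
  obtain ⟨g, hg⟩ := hcyc.exists_generator
  have htop : Subgroup.zpowers g = ⊤ := by
    rw [eq_top_iff]; exact fun x _ => hg x
  have hgord : orderOf g = n := by
    rw [← h1, ← Nat.card_zpowers, htop]
    exact Nat.card_congr (Equiv.subtypeUnivEquiv fun _ => Subgroup.mem_top _)
  -- pick γ ∈ Γ over the generator
  obtain ⟨γ, hγΓ, hγ1⟩ := g.2
  set a : Circle := (g : Circle) with ha
  have haord : orderOf a = n := by
    rw [← hgord]
    exact orderOf_injective H1.subtype Subtype.coe_injective g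
  -- second coordinate has order dividing n
  have hbmem : γ.2 ∈ H2 := ⟨γ, hγΓ, rfl⟩
  have hbdvd : orderOf γ.2 ∣ n := by
    have := H2.orderOf_dvd_natCard hbmem
    rwa [h2] at this
  have hγ1' : γ.1 = a := hγ1
  have hγn : γ ^ n = 1 := by
    have hA : γ.1 ^ n = 1 := by rw [hγ1', ← haord]; exact pow_orderOf_eq_one a
    have hB : γ.2 ^ n = 1 := orderOf_dvd_iff_pow_eq_one.mp hbdvd
    exact Prod.ext (by simpa using hA) (by simpa using hB)
  have hγord : orderOf γ = n := by
    have hd1 : orderOf γ ∣ n := orderOf_dvd_iff_pow_eq_one.mpr hγn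
    have hd2 : n ∣ orderOf γ := by
      rw [← haord, ← hγ1']
      exact orderOf_map_dvd (MonoidHom.fst Circle Circle) γ
    exact Nat.dvd_antisymm hd1 hd2
  -- key: if a^k = 1 then γ^k = 1 (integer powers)
  have key : ∀ k : ℤ, a ^ k = 1 → γ ^ k = 1 := by
    intro k hk
    have hdvd : (orderOf a : ℤ) ∣ k := orderOf_dvd_iff_zpow_eq_one.mpr hk
    exact orderOf_dvd_iff_zpow_eq_one.mp (by rw [hγord, ← haord]; exact hdvd)
  have hcyct : IsCyclic ↥(Subgroup.zpowers γ) := by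
    refine ⟨⟨⟨γ, Subgroup.mem_zpowers γ⟩, fun x => ?_⟩⟩
    obtain ⟨k, hk⟩ := x.2
    exact ⟨k, Subtype.ext (by simpa using hk)⟩
  refine ⟨Subgroup.zpowers γ, Subgroup.zpowers_le.mpr hγΓ, hcyct, ?_, ?_, ?_, ?_, ?_⟩
  · rw [Nat.card_zpowers, hγord]
  · -- image equals H1
    rw [MonoidHom.map_zpowers]
    apply le_antisymm
    · exact Subgroup.zpowers_le.mpr ⟨γ, hγΓ, rfl⟩
    · intro x hx
      obtain ⟨k, hk⟩ := hg ⟨x, hx⟩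
      refine ⟨k, ?_⟩
      have h2k : ((g ^ k : ↥H1) : Circle) = x := by
        have := congrArg Subtype.val hk; simpa using this
      show γ.1 ^ k = x
      rw [hγ1']
      simpa [ha] using h2k
  · -- injectivity of fst on zpowers γ
    rintro x ⟨i, rfl⟩ y ⟨j, rfl⟩ hxy
    have hxy' : γ.1 ^ i = γ.1 ^ j := by simpa [map_zpow] using hxy
    have hA : a ^ (i - j) = 1 := by
      rw [← hγ1', zpow_sub, hxy']; group
    have h0 : γ ^ (i - j) = 1 := key _ hA
    rw [zpow_sub] at h0
    exact mul_inv_eq_one.mp h0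
  · rw [eq_bot_iff]
    rintro x ⟨⟨-, hker⟩, ⟨k, rfl⟩⟩
    have hker' : γ.1 ^ k = 1 := by
      have h := MonoidHom.mem_ker.mp hker
      rwa [map_zpow] at h
    have hA : a ^ k = 1 := by rw [← hγ1']; exact hker'
    rw [Subgroup.mem_bot]
    exact key _ hA
  · intro x hx
    have hx1 : x.1 ∈ H1 := ⟨x, hx, rfl⟩
    obtain ⟨k, hk⟩ := hg ⟨x.1, hx1⟩
    have hk' : a ^ k = x.1 := by
      have := congrArg Subtype.val hk
      simpa [ha] using this
    refine ⟨x * (γ ^ k)⁻¹, ⟨Γ.mul_mem hx (Γ.inv_mem (Γ.zpow_mem hγΓ k)), ?_⟩,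
      γ ^ k, ⟨k, rfl⟩, by group⟩
    refine MonoidHom.mem_ker.mpr ?_
    rw [map_mul, map_inv, map_zpow]
    show x.1 * (γ.1 ^ k)⁻¹ = 1
    rw [hγ1', hk']
    group
end

section
/- (Arithmetic core of Lemma 4.2: no invariant blow-down class for a minimal symplectic G-conic bundle when N ≥ 5, N ≠ 6.) For all integers N, a, b, m with N ≥ 5, N ≠ 6, a ≤ 0, and m ≥ 1, it is impossible that both a(9 − N) − 2b = −m and a²(9 − N) − 4ab = −m hold. -/
/-- Arithmetic core of Lemma 4.2: for integers `N ≥ 5` with `N ≠ 6`, `a ≤ 0`, `m ≥ 1`,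
the two equations `a(9 - N) - 2b = -m` and `a²(9 - N) - 4ab = -m` (obtained by pairing
the invariant class `C = aK + bF` with `K` and squaring it) cannot both hold. -/
theorem stmt11 (N a b m : ℤ) (hN : 5 ≤ N) (hN6 : N ≠ 6) (ha : a ≤ 0) (hm : 1 ≤ m) :
    ¬ (a * (9 - N) - 2 * b = -m ∧ a ^ 2 * (9 - N) - 4 * a * b = -m) := by
  rintro ⟨h1, h2⟩
  have key : a ^ 2 * (9 - N) = m * (1 - 2 * a) := by linear_combination 2 * a * h1 - h2
  rcases eq_or_lt_of_le ha with rfl | ha'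
  · simp at key; omega
  · have hco : IsCoprime (1 - 2 * a) a := ⟨1, 2, by ring⟩
    have hdvd : (1 - 2 * a) ∣ a ^ 2 * (9 - N) := ⟨m, by linarith [key]⟩
    have hd : (1 - 2 * a) ∣ (9 - N) := (hco.pow_right).dvd_of_dvd_mul_left hdvd
    have hk1 : 1 ≤ 9 - N := by nlinarith [sq_nonneg a]
    have hle : 1 - 2 * a ≤ 9 - N := Int.le_of_dvd (by omega) hd
    have ha1 : a = -1 := by omega
    subst ha1
    have : (9 - N) = m * 3 := by linarith [key]
    omega
end

section
/- (Lemma 4.4, part (2): at most two fiber classes.) Let N ≥ 1 and suppose F, F′ ∈ L_N satisfy K·F = K·F′ = −2, F·F = F′·F′ = 0, F·F′ ≥ 0, and F′ = −aK + bF for some integers a, b with a ≠ 0. Then b = −1 (so that F + F′ = −aK), a > 0, a(9 − N) = 4, and (a, N) is one of (1, 5), (2, 7), (4, 8); in particular N ∈ {5, 7, 8}. -/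
lemma interForm_symm {N : ℕ} (x y : L N) : interForm x y = interForm y x := by
  simp [interForm, mul_comm]

lemma interForm_comb {N : ℕ} (x y z : L N) (c d : ℤ) :
    interForm (c • x + d • y) z = c * interForm x z + d * interForm y z := by
  simp only [interForm, Pi.add_apply, Pi.smul_apply, smul_eq_mul]
  rw [Finset.sum_congr rfl
    (fun i _ => (by ring : (c * x i.succ + d * y i.succ) * z i.succ
      = c * (x i.succ * z i.succ) + d * (y i.succ * z i.succ)))]
  rw [Finset.sum_add_distrib, ← Finset.mul_sum, ← Finset.mul_sum]
  ring

lemma interForm_KK {N : ℕ} : interForm (Kc : L N) Kc = 9 - N := by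
  simp [interForm, Kc, Fin.succ_ne_zero]

/-- Lemma 4.4, part (2): if `F, F'` are fiber classes (`K·F = K·F' = -2`,
`F² = F'² = 0`), `F·F' ≥ 0`, and `F' = -aK + bF` with `a ≠ 0`, then `b = -1`
(so `F + F' = -aK`), `a > 0`, `a(9 - N) = 4`, and `(a, N)` is one of
`(1,5)`, `(2,7)`, `(4,8)`; in particular `N ∈ {5, 7, 8}`. -/
theorem stmt12 {N : ℕ} (hN : 1 ≤ N) (F F' : L N) (a b : ℤ)
    (hKF : interForm Kc F = -2) (hKF' : interForm Kc F' = -2)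
    (hFF : interForm F F = 0) (hF'F' : interForm F' F' = 0)
    (hpos : 0 ≤ interForm F F') (ha : a ≠ 0)
    (hcomb : F' = (-a) • (Kc : L N) + b • F) :
    b = -1 ∧ F + F' = (-a) • (Kc : L N) ∧ 0 < a ∧ a * (9 - (N : ℤ)) = 4 ∧
      ((a = 1 ∧ N = 5) ∨ (a = 2 ∧ N = 7) ∨ (a = 4 ∧ N = 8)) := by
  have hFF' : interForm F F' = 2 * a := by
    rw [interForm_symm, hcomb, interForm_comb, hKF, hFF]; ring
  have hb : b = -1 := by
    have h1 : interForm F' F' = 0 := hF'F'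
    rw [hcomb, interForm_comb, ← hcomb, hKF', hFF'] at h1
    have : a * (1 + b) = 0 := by linarith
    rcases mul_eq_zero.1 this with h | h
    · exact absurd h ha
    · linarith
  subst hb
  have hK : a * (9 - (N : ℤ)) = 4 := by
    have h2 : interForm F' Kc = -2 := interForm_symm F' Kc ▸ hKF'
    rw [hcomb, interForm_comb, interForm_KK, interForm_symm F Kc, hKF] at h2
    linarith
  have hapos : 0 < a := by
    rcases lt_or_gt_of_ne ha with h | h
    · exfalso; rw [hFF'] at hpos; linarith
    · exact h
  refine ⟨rfl, ?_, hapos, hK, ?_⟩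
  · rw [hcomb]; funext i
    simp only [Pi.add_apply, Pi.smul_apply, smul_eq_mul]; ring
  · have ha4 : a ∣ 4 := ⟨9 - (N : ℤ), hK.symm⟩
    have hle : a ≤ 4 := Int.le_of_dvd (by norm_num) ha4
    interval_cases a <;> omega
end

section
/- (Lattice core of Proposition 4.5: independence of the subgroup Q from the chosen reduced basis.) Let N ≥ 2 and set F = H − E_1 in L_N. Suppose E′_2, …, E′_N ∈ L_N are such that there is a bijection σ of {2,…,N} with E′_j ∈ {E_{σ(j)}, F − E_{σ(j)}} for every j. Then for every ℤ-module automorphism g of L_N with g(F) = F, the following are equivalent: (i) for every j ∈ {2,…,N}, g(E_j) ∈ {E_j, F − E_j}; (ii) for every j ∈ {2,…,N}, g(E′_j) ∈ {E′_j, F − E′_j}. -/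
/-- Lattice core of Proposition 4.5 (independence of `Q` from the reduced basis):
with `F = H - E_1`, if `E'_2, …, E'_N` satisfy `E'_j ∈ {E_{σ(j)}, F - E_{σ(j)}}` for a
bijection `σ` of `{2,…,N}` (encoded as a permutation of the index set fixing the index
of `E_1`), then for any `ℤ`-module automorphism `g` of `L_N` fixing `F`, `g` sends each
`E_j` into `{E_j, F - E_j}` iff it sends each `E'_j` into `{E'_j, F - E'_j}`. -/
theorem stmt13 {N : ℕ} [NeZero N] (hN : 2 ≤ N)
    (σ : Equiv.Perm (Fin N)) (hσ : σ 0 = 0)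
    (E' : Fin N → L N)
    (hE' : ∀ j : Fin N, j ≠ 0 →
      E' j = Ec (σ j) ∨ E' j = (Hc - Ec 0) - Ec (σ j))
    (g : L N ≃ₗ[ℤ] L N) (hgF : g (Hc - Ec 0) = Hc - Ec 0) :
    (∀ j : Fin N, j ≠ 0 → (g (Ec j) = Ec j ∨ g (Ec j) = (Hc - Ec 0) - Ec j)) ↔
    (∀ j : Fin N, j ≠ 0 → (g (E' j) = E' j ∨ g (E' j) = (Hc - Ec 0) - E' j)) := by
  set F : L N := Hc - Ec 0 with hF
  have key : ∀ (a b : L N), (b = a ∨ b = F - a) →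
      (g a = a ∨ g a = F - a) → (g b = b ∨ g b = F - b) := by
    rintro a b (rfl | rfl) h
    · exact h
    · rcases h with h | h
      · left; rw [map_sub, hgF, h]
      · right; rw [map_sub, hgF, h]
  have key2 : ∀ a : L N, (g (F - a) = F - a ∨ g (F - a) = F - (F - a)) →
      (g a = a ∨ g a = F - a) := by
    intro a h
    rw [map_sub, hgF] at h
    rcases h with h | h
    · exact Or.inl (sub_right_inj.mp h)
    · exact Or.inr (sub_right_inj.mp h)
  constructor
  · intro h j hj
    have hσj : σ j ≠ 0 := fun hc => hj (by
      have := σ.injective (hc.trans hσ.symm); exact this)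
    exact key _ _ (hE' j hj) (h _ hσj)
  · intro h j hj
    have hj' : σ.symm j ≠ 0 := fun hc => hj (by
      rw [← σ.apply_symm_apply j, hc, hσ])
    have hh := h _ hj'
    rcases hE' (σ.symm j) hj' with hb | hb
    · rw [hb, σ.apply_symm_apply] at hh
      exact hh
    · rw [hb, σ.apply_symm_apply] at hh
      exact key2 _ hh
end
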